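/- For the extended Bernstein-Vazirani state over Z_q: applying the (n+1)-fold QFT over Z_q to the state (1/√q^n) Σ_{x ∈ Z_q^n} |x⟩|⟨s,x⟩ mod q⟩ and measuring yields an outcome (z_1,...,z_n,z_{n+1}) with z_i = −z_{n+1}·s_i (mod q) for all i, with probability 1. Equivalently, the squared amplitude of the subspace spanned by {|−c·s⟩|c⟩ : c ∈ Z_q} in the transformed state equals 1. -/

import Mathlib

/-- The amplitude of the QFT-transformed extended Bernstein-Vazirani state at outcome
`(y, c)`: `φ(y,c) = (1/(q^n √q)) ∑_{x ∈ Z_q^n} ω^{⟨x, y + c·s⟩}`, `ω = exp(2πi/q)`. -/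
noncomputable def extBVAmp (q n : ℕ) [NeZero q] (s : Fin n → ZMod q)
    (y : Fin n → ZMod q) (c : ZMod q) : ℂ :=
  (1 / ((q : ℂ) ^ n * (Real.sqrt q : ℂ))) *
    ∑ x : Fin n → ZMod q,
      Complex.exp (2 * Real.pi * Complex.I / q) ^ ((∑ i, x i * (y i + c * s i)).val)

lemma extBVAmp_diag (q n : ℕ) [NeZero q] (s : Fin n → ZMod q) (c : ZMod q) :
    extBVAmp q n s (fun i => -(c * s i)) c = 1 / (Real.sqrt q : ℂ) := by
  have hq0 : (q : ℂ) ≠ 0 := Nat.cast_ne_zero.mpr (NeZero.ne q)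
  unfold extBVAmp
  have hterm : ∀ x : Fin n → ZMod q,
      Complex.exp (2 * Real.pi * Complex.I / q) ^
        ((∑ i, x i * (-(c * s i) + c * s i)).val) = 1 := by
    intro x
    simp
  rw [Finset.sum_congr rfl (fun x _ => hterm x)]
  simp only [Finset.sum_const, Finset.card_univ, Fintype.card_fun, nsmul_eq_mul, mul_one]
  have hcard : (Fintype.card (ZMod q)) = q := ZMod.card q
  rw [hcard, Fintype.card_fin]
  push_cast
  have hpn : (q:ℂ)^n ≠ 0 := pow_ne_zero _ hq0
  field_simp

/-- Measuring the QFT of the extended Bernstein-Vazirani state yields an outcome of the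
form `(−c·s, c)` with probability 1: the total squared amplitude on the set
`{(−c·s, c) : c ∈ Z_q}` equals 1. -/
theorem extBV_success_prob_one (q n : ℕ) [NeZero q] (hq : 2 ≤ q) (s : Fin n → ZMod q) :
    ∑ c : ZMod q, Complex.normSq (extBVAmp q n s (fun i => -(c * s i)) c) = 1 := by
  have hqR : (0:ℝ) < q := by positivity
  have h : ∀ c : ZMod q, Complex.normSq (extBVAmp q n s (fun i => -(c * s i)) c) = 1 / q := by
    intro c
    rw [extBVAmp_diag]
    rw [Complex.normSq_div, Complex.normSq_one]
    rw [Complex.normSq_ofReal]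
    rw [Real.mul_self_sqrt (le_of_lt hqR)]
  rw [Finset.sum_congr rfl (fun c _ => h c)]
  simp only [Finset.sum_const, Finset.card_univ, ZMod.card, nsmul_eq_mul]
  rw [mul_one_div, div_self (ne_of_gt hqR)]
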